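/- Let B = ρ W_μ(L_{k+1}) - L_{k+1} + π_Ω(D). The matrix S_{k+1} defined by (S_{k+1})_{ij} = sgn(B_{ij}) max{ (ν/(ν+ρ))|B_{ij}|, |B_{ij}| - ρξ } for (i,j) ∈ Ω and (S_{k+1})_{ij} = B_{ij} for (i,j) ∉ Ω satisfies the equation -W_μ(L_{k+1}) + (1/ρ)(L_{k+1} + S_{k+1} - π_Ω(D)) + Z_ν(S_{k+1}) = 0, where [Z_ν(S)]_{ij} = sgn(S_{ij})min{|S_{ij}|/ν, ξ} on Ω and 0 off Ω. -/

import Mathlib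

open Matrix BigOperators Finset

variable {m n : ℕ}

/-- Euclidean norm of a vector. -/
noncomputable def e2 {k : ℕ} (v : Fin k → ℝ) : ℝ := Real.sqrt (∑ i, v i ^ 2)

/-- Spectral norm (largest singular value) of a matrix, as the operator norm ℓ2 → ℓ2. -/
noncomputable def specNorm (A : Matrix (Fin m) (Fin n) ℝ) : ℝ :=
  sSup {c | ∃ x : Fin n → ℝ, e2 x ≤ 1 ∧ c = e2 (A.mulVec x)}

/-- Frobenius (trace) inner product. -/
noncomputable def frobInner (A B : Matrix (Fin m) (Fin n) ℝ) : ℝ := ∑ i, ∑ j, A i j * B i j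

/-- Nuclear norm, via duality with the spectral norm. -/
noncomputable def nucNorm (A : Matrix (Fin m) (Fin n) ℝ) : ℝ :=
  sSup {c | ∃ W : Matrix (Fin m) (Fin n) ℝ, specNorm W ≤ 1 ∧ c = frobInner A W}

/-- Frobenius norm. -/
noncomputable def frobNorm (A : Matrix (Fin m) (Fin n) ℝ) : ℝ :=
  Real.sqrt (∑ i, ∑ j, A i j ^ 2)

/-- Squared Frobenius norm. -/
noncomputable def frobSq (A : Matrix (Fin m) (Fin n) ℝ) : ℝ := ∑ i, ∑ j, A i j ^ 2

/-- Entrywise ℓ1 norm. -/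
noncomputable def l1Norm (A : Matrix (Fin m) (Fin n) ℝ) : ℝ := ∑ i, ∑ j, |A i j|

/-- Projection onto the index set Ω (zeroing out entries off Ω). -/
def piom (Ω : Finset (Fin m × Fin n)) (A : Matrix (Fin m) (Fin n) ℝ) :
    Matrix (Fin m) (Fin n) ℝ :=
  Matrix.of fun i j => if (i, j) ∈ Ω then A i j else 0

/-- Gradient of the smoothed ℓ1 term. -/
noncomputable def znu (ν ξ : ℝ) (Ω : Finset (Fin m × Fin n))
    (S : Matrix (Fin m) (Fin n) ℝ) : Matrix (Fin m) (Fin n) ℝ :=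
  Matrix.of fun i j => if (i, j) ∈ Ω then Real.sign (S i j) * min (|S i j| / ν) ξ else 0

lemma core_aux (ν ρ ξ a : ℝ) (hν : 0 < ν) (hρ : 0 < ρ) (hξ : 0 < ξ) (ha : 0 ≤ a) :
    max (ν / (ν + ρ) * a) (a - ρ * ξ) +
      ρ * min (max (ν / (ν + ρ) * a) (a - ρ * ξ) / ν) ξ = a := by
  have hνρ : 0 < ν + ρ := by linarith
  rcases le_total a ((ν + ρ) * ξ) with h | h
  · have h1 : a - ρ * ξ ≤ ν / (ν + ρ) * a := by
      rw [div_mul_eq_mul_div, le_div_iff₀ hνρ]; nlinarith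
    rw [max_eq_left h1]
    have h2 : ν / (ν + ρ) * a / ν ≤ ξ := by
      rw [div_le_iff₀ hν, div_mul_eq_mul_div, div_le_iff₀ hνρ]; nlinarith
    rw [min_eq_left h2]
    field_simp
  · have h1 : ν / (ν + ρ) * a ≤ a - ρ * ξ := by
      rw [div_mul_eq_mul_div, div_le_iff₀ hνρ]; nlinarith
    rw [max_eq_right h1]
    have h2 : ξ ≤ (a - ρ * ξ) / ν := by
      rw [le_div_iff₀ hν]; nlinarith
    rw [min_eq_right h2]
    ring

lemma key_aux (ν ρ ξ b : ℝ) (hν : 0 < ν) (hρ : 0 < ρ) (hξ : 0 < ξ) :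
    Real.sign b * max (ν / (ν + ρ) * |b|) (|b| - ρ * ξ) +
      ρ * (Real.sign (Real.sign b * max (ν / (ν + ρ) * |b|) (|b| - ρ * ξ)) *
        min (|Real.sign b * max (ν / (ν + ρ) * |b|) (|b| - ρ * ξ)| / ν) ξ) = b := by
  rcases lt_trichotomy b 0 with hb | hb | hb
  · have habs : 0 < |b| := abs_pos.mpr hb.ne
    have hM : 0 < max (ν / (ν + ρ) * |b|) (|b| - ρ * ξ) :=
      lt_max_of_lt_left (by positivity)
    rw [Real.sign_of_neg hb]
    have hs : Real.sign (-1 * max (ν / (ν + ρ) * |b|) (|b| - ρ * ξ)) = -1 := by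
      apply Real.sign_of_neg; nlinarith
    rw [hs, abs_of_neg (by nlinarith : -1 * max (ν / (ν + ρ) * |b|) (|b| - ρ * ξ) < 0)]
    have := core_aux ν ρ ξ |b| hν hρ hξ (abs_nonneg b)
    set M := max (ν / (ν + ρ) * |b|) (|b| - ρ * ξ) with hMdef
    have e1 : -(-1 * M) = M := by ring
    rw [e1, abs_of_neg hb] at *
    set t := min (M / ν) ξ with htdef
    nlinarith [this]
  · simp [hb]
  · have habs : 0 < |b| := abs_pos.mpr hb.ne'
    have hM : 0 < max (ν / (ν + ρ) * |b|) (|b| - ρ * ξ) :=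
      lt_max_of_lt_left (by positivity)
    rw [Real.sign_of_pos hb]
    have hs : Real.sign (1 * max (ν / (ν + ρ) * |b|) (|b| - ρ * ξ)) = 1 := by
      apply Real.sign_of_pos; nlinarith
    rw [hs, abs_of_pos (by nlinarith : (0:ℝ) < 1 * max (ν / (ν + ρ) * |b|) (|b| - ρ * ξ))]
    have := core_aux ν ρ ξ |b| hν hρ hξ (abs_nonneg b)
    set M := max (ν / (ν + ρ) * |b|) (|b| - ρ * ξ) with hMdef
    rw [abs_of_pos hb] at *
    set t := min (1 * M / ν) ξ with htdef
    have e2 : 1 * M / ν = M / ν := by ring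
    rw [e2] at htdef
    nlinarith [this, min_le_left (M / ν) ξ]

/-- with `B = ρW_μ(L_{k+1}) - L_{k+1} + π_Ω(D)`, the matrix `S_{k+1}` with
entries `sgn(Bᵢⱼ)max{(ν/(ν+ρ))|Bᵢⱼ|, |Bᵢⱼ| - ρξ}` on Ω and `Bᵢⱼ` off Ω satisfies
`-W_μ(L_{k+1}) + (1/ρ)(L_{k+1} + S_{k+1} - π_Ω(D)) + Z_ν(S_{k+1}) = 0`. -/
theorem stmt10 (μ ν ρ ξ : ℝ) (hμ : 0 < μ) (hν : 0 < ν) (hρ : 0 < ρ) (hξ : 0 < ξ)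
    (D L1 W : Matrix (Fin m) (Fin n) ℝ) (Ω : Finset (Fin m × Fin n))
    (B : Matrix (Fin m) (Fin n) ℝ) (hB : B = ρ • W - L1 + piom Ω D)
    (S1 : Matrix (Fin m) (Fin n) ℝ)
    (hS1 : S1 = Matrix.of fun i j =>
      if (i, j) ∈ Ω then Real.sign (B i j) * max (ν / (ν + ρ) * |B i j|) (|B i j| - ρ * ξ)
      else B i j) :
    -W + (1 / ρ) • (L1 + S1 - piom Ω D) + znu ν ξ Ω S1 = 0 := by
  subst hB hS1
  ext i j
  by_cases hij : (i, j) ∈ Ω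
  · simp only [znu, piom, Matrix.add_apply, Matrix.sub_apply, Matrix.smul_apply,
      Matrix.neg_apply, Matrix.of_apply, Matrix.zero_apply, hij, if_pos, smul_eq_mul]
    have hkey := key_aux ν ρ ξ ((ρ • W - L1 + piom Ω D) i j) hν hρ hξ
    have hρ' : ρ ≠ 0 := hρ.ne'
    simp only [piom, Matrix.add_apply, Matrix.sub_apply, Matrix.smul_apply,
      Matrix.of_apply, hij, if_pos, smul_eq_mul] at hkey ⊢
    set b := ρ * W i j - L1 i j + D i j with hbdef
    set s := Real.sign b * max (ν / (ν + ρ) * |b|) (|b| - ρ * ξ) with hsdef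
    set z := Real.sign s * min (|s| / ν) ξ with hzdef
    field_simp
    linarith [hkey]
  · simp only [znu, piom, Matrix.add_apply, Matrix.sub_apply, Matrix.smul_apply,
      Matrix.neg_apply, Matrix.of_apply, Matrix.zero_apply, hij, if_neg, if_false,
      smul_eq_mul]
    have hρ' : ρ ≠ 0 := hρ.ne'
    field_simp
    ring
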